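/- Let X be a Hausdorff space which admits a continuous weak selection σ and is totally disconnected at a point p ∈ X. Let Δ_p be one of the intervals (←, p)_{≤σ} = {x ∈ X : x <_σ p} or (p, →)_{≤σ} = {x ∈ X : p <_σ x}. If p is the limit of a sequence of points of Δ_p, then {p} is a countable intersection of clopen subsets of the subspace cl(Δ_p). -/

import Mathlib

open Set Filter Topology

/-- The hyperspace of all nonempty closed subsets of `X`. -/
def HypF (X : Type*) [TopologicalSpace X] : Type _ :=
  {S : Set X // S.Nonempty ∧ IsClosed S}

variable {X : Type*} [TopologicalSpace X]

namespace HypF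

/-- The Vietoris topology on `HypF X`, generated by the canonical basic sets
`⟨𝒱⟩ = {S | S ⊆ ⋃𝒱 ∧ ∀ V ∈ 𝒱, S ∩ V ≠ ∅}` where `𝒱` runs over the finite
families of open subsets of `X`. -/
instance : TopologicalSpace (HypF X) :=
  TopologicalSpace.generateFrom
    {B : Set (HypF X) | ∃ 𝒱 : Finset (Set X), (∀ V ∈ 𝒱, IsOpen V) ∧
      B = {S : HypF X | S.1 ⊆ (⋃ V ∈ 𝒱, V) ∧ ∀ V ∈ 𝒱, (S.1 ∩ V).Nonempty}}

/-- The hyperspace is partially ordered by set-theoretic inclusion. -/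
instance : PartialOrder (HypF X) :=
  PartialOrder.lift Subtype.val Subtype.coe_injective

/-- The whole space `X` as an element of its hyperspace. -/
def top (X : Type*) [TopologicalSpace X] [Nonempty X] : HypF X :=
  ⟨univ, univ_nonempty, isClosed_univ⟩

/-- The union of two members of the hyperspace. -/
def union (T S : HypF X) : HypF X :=
  ⟨T.1 ∪ S.1, T.2.1.mono subset_union_left, T.2.2.union S.2.2⟩

end HypF

/-- A continuous selection for the Vietoris hyperspace `HypF X`. -/
def IsContinuousSelection (f : HypF X → X) : Prop :=
  Continuous f ∧ ∀ S : HypF X, f S ∈ S.1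

/-- `p` is a cut point of `X`: `X \ {p} = U ∪ V` with `cl U ∩ cl V = {p}`. -/
def IsCutPoint (p : X) : Prop :=
  ∃ U V : Set X, ({p}ᶜ : Set X) = U ∪ V ∧ closure U ∩ closure V = {p}

/-- `p` is a butterfly point of `X`. -/
def IsButterflyPoint (p : X) : Prop :=
  ∃ F G : Set X, IsClosed F ∧ IsClosed G ∧
    closure (F \ {p}) ∩ closure (G \ {p}) = {p}

/-- `X` is totally disconnected at `p`: `{p}` is an intersection of clopen sets. -/
def TotallyDisconnectedAt (p : X) : Prop :=
  ∃ 𝒞 : Set (Set X), (∀ C ∈ 𝒞, IsClopen C) ∧ ⋂₀ 𝒞 = {p}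

/-- `y` has a countable base of clopen neighbourhoods in `Y`. -/
def HasCountableClopenBase {Y : Type*} [TopologicalSpace Y] (y : Y) : Prop :=
  ∃ ℬ : Set (Set Y), ℬ.Countable ∧ (∀ B ∈ ℬ, IsClopen B ∧ y ∈ B) ∧
    ∀ W : Set Y, IsOpen W → y ∈ W → ∃ B ∈ ℬ, B ⊆ W

/-- `p` is countably-approachable: it is isolated, or it has a countable clopen
base in `cl U` for some open `U ⊆ X \ {p}` with `cl U = U ∪ {p}`. -/
def CountablyApproachable (p : X) : Prop :=
  IsOpen ({p} : Set X) ∨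
    ∃ U : Set X, IsOpen U ∧ U ⊆ ({p}ᶜ : Set X) ∧ closure U = U ∪ {p} ∧
      ∀ hp : p ∈ closure U, HasCountableClopenBase (⟨p, hp⟩ : closure U)

/-- `p` is selection maximal: some continuous selection `f` satisfies `f S = p`
whenever `p ∈ S`. -/
def SelectionMaximal (p : X) : Prop :=
  ∃ f : HypF X → X, IsContinuousSelection f ∧ ∀ S : HypF X, p ∈ S.1 → f S = p

/-- `ℬ` is a local base at `p`. -/
def IsLocalBaseAt (p : X) (ℬ : Set (Set X)) : Prop :=
  (∀ B ∈ ℬ, IsOpen B ∧ p ∈ B) ∧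
    ∀ W : Set X, IsOpen W → p ∈ W → ∃ B ∈ ℬ, B ⊆ W

/-- `X_Θ`: the set of values `f(X)` of continuous selections for `HypF X`. -/
def thetaSet (X : Type*) [TopologicalSpace X] [Nonempty X] : Set X :=
  {p | ∃ f : HypF X → X, IsContinuousSelection f ∧ f (HypF.top X) = p}

/-- `X_Ω`: the set of countably-approachable points of `X`. -/
def omegaSet (X : Type*) [TopologicalSpace X] : Set X :=
  {p | CountablyApproachable p}

/-- `X_Θ*`: the selection maximal points of `X_Θ`. -/
def thetaStarSet (X : Type*) [TopologicalSpace X] [Nonempty X] : Set X :=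
  {p ∈ thetaSet X | SelectionMaximal p}

/-- `X_Ω*`: the points of `X_Ω` with a countable clopen base in `X`. -/
def omegaStarSet (X : Type*) [TopologicalSpace X] : Set X :=
  {p ∈ omegaSet X | HasCountableClopenBase p}

/-- `F₂(X)`: the subsets of `X` with at least one and at most two points. -/
def HypF2 (X : Type*) : Type _ := {S : Set X // ∃ x y : X, S = {x, y}}

/-- The Vietoris topology on `HypF2 X`. -/
instance : TopologicalSpace (HypF2 X) :=
  TopologicalSpace.generateFrom
    {B : Set (HypF2 X) | ∃ 𝒱 : Finset (Set X), (∀ V ∈ 𝒱, IsOpen V) ∧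
      B = {S : HypF2 X | S.1 ⊆ (⋃ V ∈ 𝒱, V) ∧ ∀ V ∈ 𝒱, (S.1 ∩ V).Nonempty}}

/-- The unordered pair `{x, y}` as an element of `HypF2 X`. -/
def pairF {X : Type*} (x y : X) : HypF2 X := ⟨{x, y}, x, y, rfl⟩

/-- A weak selection for `X`. -/
def IsWeakSelection {X : Type*} (σ : HypF2 X → X) : Prop := ∀ S : HypF2 X, σ S ∈ S.1

/-- The strict relation `x <_σ y` generated by a weak selection `σ`. -/
def wsLT {X : Type*} (σ : HypF2 X → X) (x y : X) : Prop := σ (pairF x y) = x ∧ x ≠ y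


section Aux

lemma pairF_comm {Y : Type*} (a b : Y) : pairF a b = pairF b a :=
  Subtype.ext (Set.pair_comm a b)

lemma continuous_pairF : Continuous (fun uv : X × X => pairF uv.1 uv.2) := by
  rw [continuous_generateFrom_iff]
  rintro B ⟨𝒱, h𝒱, rfl⟩
  have hEq : (fun uv : X × X => pairF uv.1 uv.2) ⁻¹'
      {S : HypF2 X | S.1 ⊆ (⋃ V ∈ 𝒱, V) ∧ ∀ V ∈ 𝒱, (S.1 ∩ V).Nonempty}
      = ((⋃ V ∈ 𝒱, V) ×ˢ (⋃ V ∈ 𝒱, V)) ∩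
        ⋂ V ∈ 𝒱, ((V ×ˢ (univ : Set X)) ∪ ((univ : Set X) ×ˢ V)) := by
    ext ⟨u, v⟩
    change ({u, v} : Set X) ⊆ (⋃ V ∈ 𝒱, V) ∧ (∀ V ∈ 𝒱, (({u, v} : Set X) ∩ V).Nonempty) ↔ _
    simp only [mem_preimage, mem_setOf_eq, pairF, insert_subset_iff,
      singleton_subset_iff, mem_inter_iff, mem_prod, mem_iInter, mem_union,
      mem_univ, and_true, true_and]
    constructor
    · rintro ⟨⟨hu, hv⟩, h2⟩
      refine ⟨⟨hu, hv⟩, fun V hV => ?_⟩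
      rcases h2 V hV with ⟨w, hw1, hw2⟩
      rcases hw1 with rfl | rfl
      · exact Or.inl hw2
      · exact Or.inr hw2
    · rintro ⟨⟨hu, hv⟩, h2⟩
      refine ⟨⟨hu, hv⟩, fun V hV => ?_⟩
      rcases h2 V hV with h | h
      · exact ⟨u, Or.inl rfl, h⟩
      · exact ⟨v, Or.inr rfl, h⟩
  rw [hEq]
  refine ((isOpen_biUnion fun V hV => h𝒱 V hV).prod
    (isOpen_biUnion fun V hV => h𝒱 V hV)).inter
    (isOpen_biInter_finset fun V hV => ?_)
  exact ((h𝒱 V hV).prod isOpen_univ).union (isOpen_univ.prod (h𝒱 V hV))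

lemma wsLT_total (σ : HypF2 X → X) (hσ : IsWeakSelection σ) {a b : X}
    (h : a ≠ b) : wsLT σ a b ∨ wsLT σ b a := by
  have := hσ (pairF a b)
  rcases this with h1 | h1
  · exact Or.inl ⟨h1, h⟩
  · rw [mem_singleton_iff] at h1
    right
    refine ⟨?_, h.symm⟩
    rw [pairF_comm b a]
    exact h1

lemma wsLT_asymm (σ : HypF2 X → X) {a b : X} (h : wsLT σ a b) :
    ¬ wsLT σ b a := by
  rintro ⟨h1, -⟩
  rw [pairF_comm b a] at h1
  exact h.2 (h.1.symm.trans h1)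

lemma wsLT_cont [T2Space X] (σ : HypF2 X → X) (hσ : IsWeakSelection σ)
    (hσc : Continuous σ) {a b : X} (h : wsLT σ a b) :
    ∃ U V : Set X, IsOpen U ∧ IsOpen V ∧ a ∈ U ∧ b ∈ V ∧
      ∀ u ∈ U, ∀ v ∈ V, wsLT σ u v := by
  obtain ⟨hab, hne⟩ := h
  obtain ⟨Wa, Wb, hWa, hWb, haWa, hbWb, hdisj⟩ := t2_separation hne
  have hg : Continuous fun uv : X × X => σ (pairF uv.1 uv.2) :=
    hσc.comp continuous_pairF
  have hopen : IsOpen {uv : X × X | σ (pairF uv.1 uv.2) ∈ Wa} := hWa.preimage hg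
  have hmem : (a, b) ∈ {uv : X × X | σ (pairF uv.1 uv.2) ∈ Wa} := by
    simp only [mem_setOf_eq, hab]; exact haWa
  obtain ⟨u, v, hu, hv, hau, hbv, huv⟩ := isOpen_prod_iff.mp hopen a b hmem
  refine ⟨u ∩ Wa, v ∩ Wb, hu.inter hWa, hv.inter hWb, ⟨hau, haWa⟩, ⟨hbv, hbWb⟩,
    fun u' hu' v' hv' => ?_⟩
  have hσW : σ (pairF u' v') ∈ Wa := huv (mk_mem_prod hu'.1 hv'.1)
  have hne' : u' ≠ v' := by
    rintro rfl
    exact (hdisj.ne_of_mem hu'.2 hv'.2) rfl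
  have hmem2 := hσ (pairF u' v')
  rcases hmem2 with h1 | h1
  · exact ⟨h1, hne'⟩
  · rw [mem_singleton_iff] at h1
    exfalso
    rw [h1] at hσW
    exact (hdisj.ne_of_mem hσW hv'.2) rfl

lemma key_lemma (lt : X → X → Prop)
    (htot : ∀ a b : X, a ≠ b → lt a b ∨ lt b a)
    (hasym : ∀ a b : X, lt a b → ¬ lt b a)
    (hne : ∀ a b : X, lt a b → a ≠ b)
    (hcont : ∀ a b : X, lt a b → ∃ U V : Set X, IsOpen U ∧ IsOpen V ∧
      a ∈ U ∧ b ∈ V ∧ ∀ u ∈ U, ∀ v ∈ V, lt u v)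
    (p : X) (htd : TotallyDisconnectedAt p)
    (x : ℕ → X) (hx : ∀ n, lt (x n) p) (hlim : Tendsto x atTop (𝓝 p)) :
    ∀ hp : p ∈ closure {y | lt y p}, ∃ H : ℕ → Set (closure {y | lt y p}),
      (∀ n, IsClopen (H n)) ∧
      (⋂ n, H n) = {(⟨p, hp⟩ : closure {y | lt y p})} := by
  intro hp
  obtain ⟨𝒞, h𝒞clopen, h𝒞⟩ := htd
  have hxp : ∀ n, x n ≠ p := fun n => hne _ _ (hx n)
  have hC : ∀ n, ∃ C ∈ 𝒞, x n ∉ C := by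
    intro n
    by_contra hcon
    push_neg at hcon
    have : x n ∈ ⋂₀ 𝒞 := fun C hCm => hcon C hCm
    rw [h𝒞] at this
    exact hxp n this
  choose C hCmem hCx using hC
  have hpC : ∀ n, p ∈ C n := by
    intro n
    have hpmem : p ∈ ⋂₀ 𝒞 := by rw [h𝒞]; exact mem_singleton p
    exact hpmem _ (hCmem n)
  -- the sets {y | lt a y} and {y | lt y a} are open
  have hOopen : ∀ a : X, IsOpen {y | lt a y} := by
    intro a
    rw [isOpen_iff_forall_mem_open]
    intro y hy
    obtain ⟨U, V, hU, hV, haU, hyV, hlt⟩ := hcont a y hy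
    exact ⟨V, fun v hv => hlt a haU v hv, hV, hyV⟩
  have hO'open : ∀ a : X, IsOpen {y | lt y a} := by
    intro a
    rw [isOpen_iff_forall_mem_open]
    intro y hy
    obtain ⟨U, V, hU, hV, hyU, haV, hlt⟩ := hcont y a hy
    exact ⟨U, fun u hu => hlt u hu a haV, hU, hyU⟩
  -- closure of Δ is contained in Δ ∪ {p}
  have hclΔ : ∀ q ∈ closure {y | lt y p}, q ≠ p → lt q p := by
    intro q hq hqp
    rcases htot q p hqp with h | h
    · exact h
    · obtain ⟨V, U, hV, hU, hpV, hqU, hlt⟩ := hcont p q h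
      obtain ⟨y, hyU, hyΔ⟩ := mem_closure_iff.mp hq U hU hqU
      exact (hasym y p hyΔ (hlt p hpV y hyU)).elim
  refine ⟨fun n => Subtype.val ⁻¹' ({y | lt (x n) y} ∩ C n), fun n => ?_, ?_⟩
  · refine ⟨?_, ?_⟩
    · -- closed : equals preimage of C n ∩ {y | lt y (x n)}ᶜ
      show IsClosed (Subtype.val ⁻¹' ({y | lt (x n) y} ∩ C n) :
        Set (closure {y | lt y p}))
      have hEq : (Subtype.val ⁻¹' ({y | lt (x n) y} ∩ C n) :
            Set (closure {y | lt y p}))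
          = Subtype.val ⁻¹' (C n ∩ {y | lt y (x n)}ᶜ) := by
        ext q
        simp only [mem_preimage, mem_inter_iff, mem_setOf_eq, mem_compl_iff]
        constructor
        · rintro ⟨h1, h2⟩
          exact ⟨h2, hasym _ _ h1⟩
        · rintro ⟨h1, h2⟩
          refine ⟨?_, h1⟩
          have hneq : x n ≠ (q : X) := fun he => hCx n (he ▸ h1)
          rcases htot (x n) (q : X) hneq with h | h
          · exact h
          · exact absurd h h2
      rw [hEq]
      exact ((h𝒞clopen _ (hCmem n)).1.inter (hO'open (x n)).isClosed_compl).preimage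
        continuous_subtype_val
    · exact ((hOopen (x n)).inter (h𝒞clopen _ (hCmem n)).2).preimage
        continuous_subtype_val
  · ext q
    simp only [mem_iInter, mem_preimage, mem_inter_iff, mem_setOf_eq,
      mem_singleton_iff]
    constructor
    · intro hq
      by_contra hqp
      have hqne : (q : X) ≠ p := fun he => hqp (Subtype.ext he)
      have hqlt : lt (q : X) p := hclΔ _ q.2 hqne
      obtain ⟨U, V, hU, hV, hqU, hpV, hlt⟩ := hcont _ _ hqlt
      obtain ⟨n, hn⟩ := (hlim.eventually (hV.mem_nhds hpV)).exists
      exact hasym _ _ (hq n).1 (hlt _ hqU _ hn)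
    · rintro rfl
      exact fun n => ⟨hx n, hpC n⟩

end Aux

/-- If `X` has a continuous weak selection `σ`, is totally
disconnected at `p`, `Δ_p` is one of the intervals `(←, p)_{≤σ}` or
`(p, →)_{≤σ}`, and `p` is the limit of a sequence of points of `Δ_p`, then
`{p}` is a countable intersection of clopen subsets of `cl Δ_p`. -/
theorem statement10 (X : Type*) [TopologicalSpace X] [T2Space X]
    (σ : HypF2 X → X) (hσ : IsWeakSelection σ) (hσc : Continuous σ)
    (p : X) (htd : TotallyDisconnectedAt p)
    (Δ : Set X) (hΔ : Δ = {x | wsLT σ x p} ∨ Δ = {x | wsLT σ p x})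
    (x : ℕ → X) (hx : ∀ n, x n ∈ Δ) (hlim : Tendsto x atTop (𝓝 p)) :
    ∀ hp : p ∈ closure Δ, ∃ H : ℕ → Set (closure Δ),
      (∀ n, IsClopen (H n)) ∧ (⋂ n, H n) = {(⟨p, hp⟩ : closure Δ)} := by
  rcases hΔ with rfl | rfl
  · exact key_lemma (wsLT σ) (fun a b h => wsLT_total σ hσ h)
      (fun a b h => wsLT_asymm σ h) (fun a b h => h.2)
      (fun a b h => wsLT_cont σ hσ hσc h) p htd x hx hlim
  · refine key_lemma (fun a b => wsLT σ b a)
      (fun a b h => (wsLT_total σ hσ (Ne.symm h)))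
      (fun a b h => wsLT_asymm σ h) (fun a b h => h.2.symm)
      (fun a b h => ?_) p htd x hx hlim
    obtain ⟨U, V, hU, hV, hbU, haV, hlt⟩ := wsLT_cont σ hσ hσc h
    exact ⟨V, U, hV, hU, haV, hbU, fun u hu v hv => hlt v hv u hu⟩
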